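/- Let A and B be complete perfect distributive InFL-algebras and h : A → B a complete homomorphism. Define h₊ : J∞(B) → J∞(A) by h₊(b) = ⋀ h⁻¹[↑b]. Then: (i) h₊ is a DInFL-frame morphism from the dual frame B₊ to the dual frame A₊; (ii) if h is injective then h₊ is surjective; (iii) if h is surjective then h₊ is an order-embedding. -/
import Mathlib


/-- An involutive FL-algebra (InFL-algebra) structure on a lattice:
a monoid operation with residuation law (Res) expressed via the two
linear negations `lneg` (∼) and `rneg` (−), which are inverse involutions. -/
structure InFL (A : Type*) [Lattice A] where
  mul : A → A → A
  one : A
  mul_assoc : ∀ a b c : A, mul (mul a b) c = mul a (mul b c)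
  one_mul : ∀ a : A, mul one a = a
  mul_one : ∀ a : A, mul a one = a
  lneg : A → A
  rneg : A → A
  res_left : ∀ a b c : A, mul a b ≤ c ↔ a ≤ rneg (mul b (lneg c))
  res_right : ∀ a b c : A, mul a b ≤ c ↔ b ≤ lneg (mul (rneg c) a)
  rneg_lneg : ∀ a : A, rneg (lneg a) = a
  lneg_rneg : ∀ a : A, lneg (rneg a) = a

/-- The sum operation `a + b := −(∼b · ∼a)` of an InFL-algebra. -/
def InFL.sum {A : Type*} [Lattice A] (S : InFL A) (a b : A) : A :=
  S.rneg (S.mul (S.lneg b) (S.lneg a))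

/-- A quasi relation algebra: a De Morgan InFL-algebra satisfying (Dp):
`¬(a·b) = ¬a + ¬b`. -/
structure QRA (A : Type*) [Lattice A] extends InFL A where
  neg : A → A
  neg_neg : ∀ a : A, neg (neg a) = a
  dm : ∀ a b : A, neg (a ⊓ b) = neg a ⊔ neg b
  dp : ∀ a b : A, neg (mul a b) = rneg (mul (lneg (neg b)) (lneg (neg a)))

/-- Completely join-irreducible element of a complete lattice. -/
def CJI {A : Type*} [CompleteLattice A] (j : A) : Prop :=
  ∀ S : Set A, j = sSup S → j ∈ S

/-- Completely meet-irreducible element of a complete lattice. -/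
def CMI {A : Type*} [CompleteLattice A] (m : A) : Prop :=
  ∀ S : Set A, m = sInf S → m ∈ S

/-- A complete lattice is perfect if the completely join-irreducibles are join-dense
and the completely meet-irreducibles are meet-dense. -/
def PerfectLattice (A : Type*) [CompleteLattice A] : Prop :=
  ∀ a : A, a = sSup {j | CJI j ∧ j ≤ a} ∧ a = sInf {m | CMI m ∧ a ≤ m}

/-- The map `κ(j) = ⋁ {a : j ≰ a}`. -/
def kappa {A : Type*} [CompleteLattice A] (j : A) : A :=
  sSup {a | ¬ j ≤ a}

/-- A complete homomorphism between complete (perfect distributive)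
InFL-algebras: it preserves arbitrary joins and meets as well as
`·`, `1`, `∼` and `−`. -/
def IsCompleteInFLHom {A B : Type*} [CompleteLattice A] [CompleteLattice B]
    (SA : InFL A) (SB : InFL B) (h : A → B) : Prop :=
  (∀ S : Set A, h (sSup S) = sSup (h '' S)) ∧
  (∀ S : Set A, h (sInf S) = sInf (h '' S)) ∧
  (∀ a b : A, h (SA.mul a b) = SB.mul (h a) (h b)) ∧
  h SA.one = SB.one ∧
  (∀ a : A, h (SA.lneg a) = SB.lneg (h a)) ∧
  (∀ a : A, h (SA.rneg a) = SB.rneg (h a))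

section AuxLattice

variable {A : Type*} [CompleteLattice A]

lemma cmi_meet_prime (hdist : ∀ a b c : A, a ⊓ (b ⊔ c) = (a ⊓ b) ⊔ (a ⊓ c))
    {m a b : A} (hm : CMI m) (hab : a ⊓ b ≤ m) : a ≤ m ∨ b ≤ m := by
  have h1 : (m ⊔ a) ⊓ (m ⊔ b) = ((m ⊔ a) ⊓ m) ⊔ ((m ⊔ a) ⊓ b) := hdist _ _ _
  have h2 : (m ⊔ a) ⊓ m = m := inf_eq_right.mpr le_sup_left
  have h3 : (m ⊔ a) ⊓ b = (m ⊓ b) ⊔ (a ⊓ b) := by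
    rw [inf_comm, hdist, inf_comm b m, inf_comm b a]
  have key : m = (m ⊔ a) ⊓ (m ⊔ b) := by
    rw [h1, h2, h3, ← sup_assoc]
    have : m ⊔ (m ⊓ b) = m := sup_eq_left.mpr inf_le_left
    rw [this]
    exact (sup_eq_left.mpr hab).symm
  have hpair : m = sInf {m ⊔ a, m ⊔ b} := by rw [sInf_pair]; exact key
  have hmem := hm _ hpair
  simp only [Set.mem_insert_iff, Set.mem_singleton_iff] at hmem
  rcases hmem with hec | hec
  · exact Or.inl (le_sup_right.trans hec.ge)
  · exact Or.inr (le_sup_right.trans hec.ge)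

lemma cji_prime (hperf : PerfectLattice A)
    (hdist : ∀ a b c : A, a ⊓ (b ⊔ c) = (a ⊓ b) ⊔ (a ⊓ c))
    {j : A} (hj : CJI j) {T : Set A} (hle : j ≤ sSup T) : ∃ t ∈ T, j ≤ t := by
  by_contra hcon
  push_neg at hcon
  have hjs : ¬ j ≤ sSup {a : A | a < j} := by
    intro hle'
    have heq : j = sSup {a : A | a < j} := le_antisymm hle' (sSup_le fun a ha => ha.le)
    exact absurd (hj _ heq) (lt_irrefl j)
  obtain ⟨m, hmCMI, hjsm, hjm⟩ : ∃ m, CMI m ∧ sSup {a : A | a < j} ≤ m ∧ ¬ j ≤ m := by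
    by_contra hc
    push_neg at hc
    refine hjs ?_
    calc j ≤ sInf {m | CMI m ∧ sSup {a : A | a < j} ≤ m} :=
          le_sInf (fun m hm => hc m hm.1 hm.2)
      _ = sSup {a : A | a < j} := ((hperf (sSup {a : A | a < j})).2).symm
  have hTm : ∀ t ∈ T, t ≤ m := by
    intro t ht
    have h1 : j ⊓ t < j := lt_of_le_of_ne inf_le_left
      (fun e => hcon t ht (by rw [← e]; exact inf_le_right))
    have h2 : j ⊓ t ≤ m := (le_sSup (show j ⊓ t ∈ {a : A | a < j} from h1)).trans hjsm
    rcases cmi_meet_prime hdist hmCMI h2 with hx | hx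
    · exact absurd hx hjm
    · exact hx
  exact hjm (hle.trans (sSup_le hTm))

lemma kappa_le_iff (hperf : PerfectLattice A)
    (hdist : ∀ a b c : A, a ⊓ (b ⊔ c) = (a ⊓ b) ⊔ (a ⊓ c))
    {j : A} (hj : CJI j) (a : A) : a ≤ kappa j ↔ ¬ j ≤ a := by
  constructor
  · intro hk hja
    have : j ≤ sSup {x : A | ¬ j ≤ x} := hja.trans hk
    obtain ⟨x, hx, hjx⟩ := cji_prime hperf hdist hj this
    exact hx hjx
  · intro hna
    exact le_sSup hna

end AuxLattice

section AuxInFL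

variable {A : Type*} [CompleteLattice A] (S : InFL A)

lemma infl_mono_left {a a' : A} (hle : a ≤ a') (b : A) : S.mul a b ≤ S.mul a' b := by
  have h1 := (S.res_left a' b (S.mul a' b)).mp le_rfl
  exact (S.res_left a b (S.mul a' b)).mpr (hle.trans h1)

lemma infl_mono_right (a : A) {b b' : A} (hle : b ≤ b') : S.mul a b ≤ S.mul a b' := by
  have h1 := (S.res_right a b' (S.mul a b')).mp le_rfl
  exact (S.res_right a b (S.mul a b')).mpr (hle.trans h1)

lemma infl_G1 (a b : A) : S.mul a b ≤ S.lneg S.one ↔ b ≤ S.lneg a := by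
  have := S.res_right a b (S.lneg S.one)
  rwa [S.rneg_lneg, S.one_mul] at this

lemma infl_G2 (a b : A) : S.mul a b ≤ S.rneg S.one ↔ a ≤ S.rneg b := by
  have := S.res_left a b (S.rneg S.one)
  rwa [S.lneg_rneg, S.mul_one] at this

lemma infl_lneg_one (S : InFL A) : S.lneg S.one = S.rneg S.one := by
  apply le_antisymm
  · have := (infl_G2 S S.one (S.lneg S.one)).mpr (by rw [S.rneg_lneg])
    rwa [S.one_mul] at this
  · have := (infl_G1 S (S.rneg S.one) S.one).mpr (by rw [S.lneg_rneg])
    rwa [S.mul_one] at this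

lemma infl_galois (a b : A) : b ≤ S.lneg a ↔ a ≤ S.rneg b := by
  rw [← infl_G1 S a b, infl_lneg_one, infl_G2]

lemma infl_lneg_antitone {a a' : A} (hle : a ≤ a') : S.lneg a' ≤ S.lneg a := by
  have := (infl_galois S a (S.lneg a')).mpr
  refine this ?_
  rw [S.rneg_lneg]
  exact hle

lemma infl_rneg_antitone {a a' : A} (hle : a ≤ a') : S.rneg a' ≤ S.rneg a := by
  have := (infl_galois S (S.rneg a') a).mp
  refine this ?_
  rw [S.lneg_rneg]
  exact hle

lemma infl_lneg_le_iff (a b : A) : S.lneg a ≤ b ↔ S.rneg b ≤ a := by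
  constructor
  · intro hle
    have := infl_rneg_antitone S hle
    rwa [S.rneg_lneg] at this
  · intro hle
    have := infl_lneg_antitone S hle
    rwa [S.lneg_rneg] at this

lemma infl_rneg_le_iff (a b : A) : S.rneg a ≤ b ↔ S.lneg b ≤ a := by
  constructor
  · intro hle
    have := infl_lneg_antitone S hle
    rwa [S.lneg_rneg] at this
  · intro hle
    have := infl_rneg_antitone S hle
    rwa [S.rneg_lneg] at this

lemma infl_mul_sSup_le_left (T : Set A) (b c : A)
    (hall : ∀ t ∈ T, S.mul t b ≤ c) : S.mul (sSup T) b ≤ c := by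
  rw [S.res_left]
  exact sSup_le fun t ht => (S.res_left t b c).mp (hall t ht)

lemma infl_mul_sSup_le_right (a : A) (T : Set A) (c : A)
    (hall : ∀ t ∈ T, S.mul a t ≤ c) : S.mul a (sSup T) ≤ c := by
  rw [S.res_right]
  exact sSup_le fun t ht => (S.res_right a t c).mp (hall t ht)

end AuxInFL

/-- The dual `h₊(b) = ⋀ h⁻¹[↑b]` of a complete homomorphism `h : A → B` between
complete perfect distributive InFL-algebras is a DInFL-frame morphism from the
dual frame `B₊` to the dual frame `A₊` (the frame conditions are spelled out in
terms of the algebras, where on `J∞` one has `x ≼ y ⟺ y ≤ x`,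
`z ∈ x∘y ⟺ z ≤ x·y`, `x^∼ = ∼κ(x)`, `x^− = −κ(x)` and `I₁ = {i : i ≤ 1}`);
moreover `h₊` is surjective if `h` is injective, and an order-embedding if `h`
is surjective. -/
theorem complete_hom_dual_frame_morphism {A B : Type*}
    [CompleteLattice A] [CompleteLattice B]
    (SA : InFL A) (SB : InFL B)
    (hperfA : PerfectLattice A) (hperfB : PerfectLattice B)
    (hdistA : ∀ a b c : A, a ⊓ (b ⊔ c) = (a ⊓ b) ⊔ (a ⊓ c))
    (hdistB : ∀ a b c : B, a ⊓ (b ⊔ c) = (a ⊓ b) ⊔ (a ⊓ c))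
    (h : A → B) (hh : IsCompleteInFLHom SA SB h) :
    ((∀ b : B, CJI b → CJI (sInf {a : A | b ≤ h a})) ∧
     (∀ b b' : B, CJI b → CJI b' → b' ≤ b →
       sInf {a : A | b' ≤ h a} ≤ sInf {a : A | b ≤ h a}) ∧
     (∀ b₁ b₂ b₃ : B, CJI b₁ → CJI b₂ → CJI b₃ → b₁ ≤ SB.mul b₂ b₃ →
       sInf {a : A | b₁ ≤ h a} ≤ SA.mul (sInf {a : A | b₂ ≤ h a}) (sInf {a : A | b₃ ≤ h a})) ∧
     (∀ (c : B) (a₁ a₂ : A), CJI c → CJI a₁ → CJI a₂ →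
       sInf {a : A | c ≤ h a} ≤ SA.mul a₁ a₂ →
       ∃ b₁ b₂ : B, CJI b₁ ∧ CJI b₂ ∧
         sInf {a : A | b₁ ≤ h a} ≤ a₁ ∧ sInf {a : A | b₂ ≤ h a} ≤ a₂ ∧
         c ≤ SB.mul b₁ b₂) ∧
     (∀ b : B, CJI b →
       sInf {a : A | SB.lneg (kappa b) ≤ h a} = SA.lneg (kappa (sInf {a : A | b ≤ h a}))) ∧
     (∀ b : B, CJI b →
       sInf {a : A | SB.rneg (kappa b) ≤ h a} = SA.rneg (kappa (sInf {a : A | b ≤ h a}))) ∧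
     (∀ b : B, CJI b → (b ≤ SB.one ↔ sInf {a : A | b ≤ h a} ≤ SA.one))) ∧
    (Function.Injective h →
      ∀ a : A, CJI a → ∃ b : B, CJI b ∧ sInf {x : A | b ≤ h x} = a) ∧
    (Function.Surjective h →
      ∀ b b' : B, CJI b → CJI b' →
        (b' ≤ b ↔ sInf {a : A | b' ≤ h a} ≤ sInf {a : A | b ≤ h a})) := by
  obtain ⟨hsup, hinf, hmul, hone, hlneg, hrneg⟩ := hh
  -- h is monotone
  have hmono : ∀ {a b : A}, a ≤ b → h a ≤ h b := by
    intro a b hab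
    have hp := hsup {a, b}
    rw [sSup_pair, sup_eq_right.mpr hab, Set.image_pair, sSup_pair] at hp
    rw [hp]
    exact le_sup_left
  -- unit of the adjunction
  have hunit : ∀ b : B, b ≤ h (sInf {a : A | b ≤ h a}) := by
    intro b
    rw [hinf]
    refine le_sInf fun x hx => ?_
    obtain ⟨a, ha, rfl⟩ := hx
    exact ha
  -- Galois connection
  have hgal : ∀ (b : B) (a : A), sInf {x : A | b ≤ h x} ≤ a ↔ b ≤ h a := by
    intro b a
    constructor
    · intro hle
      exact (hunit b).trans (hmono hle)
    · intro hle
      exact sInf_le hle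
  -- frame condition (1): CJI is preserved
  have g1 : ∀ b : B, CJI b → CJI (sInf {a : A | b ≤ h a}) := by
    intro b hb Sset hSeq
    have h1 : b ≤ sSup (h '' Sset) := by
      have hx := hunit b
      rw [hSeq, hsup Sset] at hx
      exact hx
    obtain ⟨x, hxm, hbx⟩ := cji_prime hperfB hdistB hb h1
    obtain ⟨s, hs, rfl⟩ := hxm
    have h2 : sInf {a : A | b ≤ h a} ≤ s := sInf_le hbx
    have h3 : s ≤ sInf {a : A | b ≤ h a} := by rw [hSeq]; exact le_sSup hs
    have h4 : sInf {a : A | b ≤ h a} = s := le_antisymm h2 h3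
    rw [h4]
    exact hs
  refine ⟨⟨g1, ?_, ?_, ?_, ?_, ?_, ?_⟩, ?_, ?_⟩
  · -- (2) monotonicity
    intro b b' _ _ hle
    exact le_sInf fun a ha => sInf_le (hle.trans ha)
  · -- (3) forward condition on ∘
    intro b₁ b₂ b₃ _ _ _ hle
    refine (hgal _ _).mpr ?_
    rw [hmul]
    exact hle.trans ((infl_mono_left SB (hunit b₂) b₃).trans
      (infl_mono_right SB _ (hunit b₃)))
  · -- (4) back condition on ∘
    intro c a₁ a₂ hc _ _ hle
    have h0 : c ≤ SB.mul (h a₁) (h a₂) := by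
      have hx := (hgal c _).mp hle
      rwa [hmul] at hx
    have hJ1 : h a₁ = sSup {b : B | CJI b ∧ b ≤ h a₁} := (hperfB (h a₁)).1
    have hJ2 : h a₂ = sSup {b : B | CJI b ∧ b ≤ h a₂} := (hperfB (h a₂)).1
    have step1 : SB.mul (h a₁) (h a₂) ≤
        sSup ((fun t => SB.mul t (h a₂)) '' {b : B | CJI b ∧ b ≤ h a₁}) := by
      nth_rewrite 1 [hJ1]
      exact infl_mul_sSup_le_left SB _ _ _ (fun t ht => le_sSup ⟨t, ht, rfl⟩)
    obtain ⟨x, hxm, hcx⟩ := cji_prime hperfB hdistB hc (h0.trans step1)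
    obtain ⟨b₁, hb₁J, rfl⟩ := hxm
    have step2 : SB.mul b₁ (h a₂) ≤
        sSup ((fun t => SB.mul b₁ t) '' {b : B | CJI b ∧ b ≤ h a₂}) := by
      nth_rewrite 1 [hJ2]
      exact infl_mul_sSup_le_right SB _ _ _ (fun t ht => le_sSup ⟨t, ht, rfl⟩)
    obtain ⟨y, hym, hcy⟩ := cji_prime hperfB hdistB hc (hcx.trans step2)
    obtain ⟨b₂, hb₂J, rfl⟩ := hym
    exact ⟨b₁, b₂, hb₁J.1, hb₂J.1, (hgal _ _).mpr hb₁J.2, (hgal _ _).mpr hb₂J.2, hcy⟩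
  · -- (5) lneg condition
    intro b hb
    have hfb : CJI (sInf {a : A | b ≤ h a}) := g1 b hb
    have charL : ∀ a : A, sInf {x : A | SB.lneg (kappa b) ≤ h x} ≤ a ↔
        ¬ sInf {x : A | b ≤ h x} ≤ SA.rneg a := by
      intro a
      rw [hgal, infl_lneg_le_iff, kappa_le_iff hperfB hdistB hb, ← hrneg, ← hgal]
    have charR : ∀ a : A, SA.lneg (kappa (sInf {x : A | b ≤ h x})) ≤ a ↔
        ¬ sInf {x : A | b ≤ h x} ≤ SA.rneg a := by
      intro a
      rw [infl_lneg_le_iff, kappa_le_iff hperfA hdistA hfb]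
    exact le_antisymm ((charL _).mpr ((charR _).mp le_rfl))
      ((charR _).mpr ((charL _).mp le_rfl))
  · -- (6) rneg condition
    intro b hb
    have hfb : CJI (sInf {a : A | b ≤ h a}) := g1 b hb
    have charL : ∀ a : A, sInf {x : A | SB.rneg (kappa b) ≤ h x} ≤ a ↔
        ¬ sInf {x : A | b ≤ h x} ≤ SA.lneg a := by
      intro a
      rw [hgal, infl_rneg_le_iff, kappa_le_iff hperfB hdistB hb, ← hlneg, ← hgal]
    have charR : ∀ a : A, SA.rneg (kappa (sInf {x : A | b ≤ h x})) ≤ a ↔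
        ¬ sInf {x : A | b ≤ h x} ≤ SA.lneg a := by
      intro a
      rw [infl_rneg_le_iff, kappa_le_iff hperfA hdistA hfb]
    exact le_antisymm ((charL _).mpr ((charR _).mp le_rfl))
      ((charR _).mpr ((charL _).mp le_rfl))
  · -- (7) identity condition
    intro b _
    have hx := hgal b SA.one
    rw [hone] at hx
    exact hx.symm
  · -- (ii) injective ⟹ surjective dual
    intro hinj a ha
    have hrefl : ∀ {x y : A}, h x ≤ h y → x ≤ y := by
      intro x y hxy
      have hp := hsup {x, y}
      rw [sSup_pair, Set.image_pair, sSup_pair, sup_eq_right.mpr hxy] at hp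
      exact sup_eq_right.mp (hinj hp)
    have hfha : sInf {x : A | h a ≤ h x} = a :=
      le_antisymm (sInf_le le_rfl) (le_sInf fun x hx => hrefl hx)
    have hha : h a = sSup {b : B | CJI b ∧ b ≤ h a} := (hperfB (h a)).1
    have key : a = sSup ((fun b => sInf {x : A | b ≤ h x}) '' {b : B | CJI b ∧ b ≤ h a}) := by
      apply le_antisymm
      · have h1 : sInf {x : A | h a ≤ h x} ≤
            sSup ((fun b => sInf {x : A | b ≤ h x}) '' {b : B | CJI b ∧ b ≤ h a}) := by
          refine (hgal _ _).mpr ?_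
          nth_rewrite 1 [hha]
          refine sSup_le fun bb hbb => ?_
          exact (hunit bb).trans (hmono (le_sSup ⟨bb, hbb, rfl⟩))
        rw [hfha] at h1
        exact h1
      · refine sSup_le fun x hx => ?_
        obtain ⟨bb, hbbJ, rfl⟩ := hx
        exact (hgal _ _).mpr hbbJ.2
    obtain ⟨bb, hbbJ, heq⟩ := ha _ key
    exact ⟨bb, hbbJ.1, heq⟩
  · -- (iii) surjective ⟹ order-embedding
    intro hsurj b b' _ _
    have hcounit : ∀ x : B, h (sInf {a : A | x ≤ h a}) = x := by
      intro x
      refine le_antisymm ?_ (hunit x)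
      obtain ⟨a₀, rfl⟩ := hsurj x
      rw [hinf]
      exact sInf_le ⟨a₀, le_rfl, rfl⟩
    constructor
    · intro hle
      exact le_sInf fun a ha => sInf_le (hle.trans ha)
    · intro hle
      calc b' ≤ h (sInf {a : A | b' ≤ h a}) := hunit b'
        _ ≤ h (sInf {a : A | b ≤ h a}) := hmono hle
        _ = b := hcounit b
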